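/- Let l, k > 0 and d ≥ 0. Define, for v ∈ (0, k), h(v) = 1 + (m(v) + (4dlv − k((d+l)² + k²))·√(m(v))) / (8k²l²(k−v)v), where m(v) = 16l²(d²+k²)v² − 8lk(dk² + d³ + 2ld² + l²d + 2k²l)v + k²(2dl + l² + d² + k²)². Then h(v) tends to 0 as v tends to 0 from the right, and h(v) tends to 0 as v tends to k from the left. -/

import Mathlib

open Filter

theorem stmt_7 (l k d : ℝ) (hl : 0 < l) (hk : 0 < k) (hd : 0 ≤ d)
    (m h : ℝ → ℝ)
    (hm : ∀ v, m v = 16 * l ^ 2 * (d ^ 2 + k ^ 2) * v ^ 2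
      - 8 * l * k * (d * k ^ 2 + d ^ 3 + 2 * l * d ^ 2 + l ^ 2 * d + 2 * k ^ 2 * l) * v
      + k ^ 2 * (2 * d * l + l ^ 2 + d ^ 2 + k ^ 2) ^ 2)
    (hh : ∀ v ∈ Set.Ioo (0 : ℝ) k,
      h v = 1 + (m v + (4 * d * l * v - k * ((d + l) ^ 2 + k ^ 2)) * Real.sqrt (m v))
        / (8 * k ^ 2 * l ^ 2 * (k - v) * v)) :
    Tendsto h (nhdsWithin 0 (Set.Ioi 0)) (nhds 0) ∧
    Tendsto h (nhdsWithin k (Set.Iio k)) (nhds 0) := by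
  have hmf : m = fun v => 16 * l ^ 2 * (d ^ 2 + k ^ 2) * v ^ 2
      - 8 * l * k * (d * k ^ 2 + d ^ 3 + 2 * l * d ^ 2 + l ^ 2 * d + 2 * k ^ 2 * l) * v
      + k ^ 2 * (2 * d * l + l ^ 2 + d ^ 2 + k ^ 2) ^ 2 := funext hm
  have hmc : Continuous m := by rw [hmf]; continuity
  set S : ℝ := (d + l) ^ 2 + k ^ 2 with hS
  have hSpos : 0 < S := by positivity
  set g : ℝ → ℝ := fun v =>
    ((k * S - 4 * d * l * v) - Real.sqrt (m v)) /
    ((k * S - 4 * d * l * v) + Real.sqrt (m v)) with hg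
  -- m 0 and m k values
  have hm0 : m 0 = (k * S) ^ 2 := by rw [hm]; ring
  have hmk : m k = (k * ((d - l) ^ 2 + k ^ 2)) ^ 2 := by rw [hm]; ring
  have hs0 : Real.sqrt (m 0) = k * S := by
    rw [hm0, Real.sqrt_sq (by positivity)]
  have hsk : Real.sqrt (m k) = k * ((d - l) ^ 2 + k ^ 2) := by
    rw [hmk, Real.sqrt_sq (by positivity)]
  -- A is positive for 0 ≤ v ≤ k
  have hA : ∀ v : ℝ, v ≤ k → 0 < k * S - 4 * d * l * v := by
    intro v hv
    have h1 : 0 ≤ d * l * (k - v) := mul_nonneg (mul_nonneg hd hl.le) (by linarith)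
    rw [hS]
    nlinarith [h1, mul_nonneg hk.le (sq_nonneg (d - l)), pow_pos hk 3]
  -- pointwise equality h = g where m ≥ 0 and 0 < v < k
  have key : ∀ v : ℝ, 0 < v → v < k → 0 ≤ m v → h v = g v := by
    intro v hv1 hv2 hmv
    rw [hh v ⟨hv1, hv2⟩]
    simp only [hg]
    set s := Real.sqrt (m v) with hs
    have hs2 : s ^ 2 = m v := Real.sq_sqrt hmv
    have hsnn : 0 ≤ s := Real.sqrt_nonneg _
    have hApos : 0 < k * S - 4 * d * l * v := hA v hv2.le
    have hden1 : (k * S - 4 * d * l * v) + s ≠ 0 := by positivity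
    have hden2 : 8 * k ^ 2 * l ^ 2 * (k - v) * v ≠ 0 := by
      have : 0 < k - v := by linarith
      positivity
    rw [hm] at hs2
    rw [hm v, hS] at *
    rw [one_add_div hden2, div_eq_div_iff hden2 hden1]
    linear_combination (-(k * ((d + l) ^ 2 + k ^ 2) - 4 * d * l * v)) * hs2
  -- continuity of g at 0 and k
  have hgc0 : ContinuousAt g 0 := by
    apply ContinuousAt.div
    · fun_prop
    · fun_prop
    · simp only [mul_zero, sub_zero, hs0]
      positivity
  have hgck : ContinuousAt g k := by
    apply ContinuousAt.div
    · fun_prop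
    · fun_prop
    · simp only [hsk]
      have := hA k le_rfl
      positivity
  have hg0 : g 0 = 0 := by simp [hg, hs0]
  have hgk : g k = 0 := by
    simp only [hg, hsk]
    have : k * S - 4 * d * l * k - k * ((d - l) ^ 2 + k ^ 2) = 0 := by
      simp only [hS]; ring
    rw [this, zero_div]
  constructor
  · have hev : h =ᶠ[nhdsWithin 0 (Set.Ioi 0)] g := by
      have h1 : ∀ᶠ v in nhdsWithin 0 (Set.Ioi 0), v < k :=
        eventually_nhdsWithin_of_eventually_nhds
          (Filter.Tendsto.eventually_lt_const hk tendsto_id)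
      have h2 : ∀ᶠ v in nhdsWithin 0 (Set.Ioi 0), 0 ≤ m v := by
        apply eventually_nhdsWithin_of_eventually_nhds
        have h2' : ∀ᶠ v in nhds 0, 0 < m v :=
          Filter.Tendsto.eventually_const_lt (by rw [hm0]; positivity) hmc.continuousAt
        filter_upwards [h2'] with v hv using le_of_lt hv
      filter_upwards [h1, h2, self_mem_nhdsWithin] with v hv1 hv2 hv3
      exact key v hv3 hv1 hv2
    have : Tendsto g (nhdsWithin 0 (Set.Ioi 0)) (nhds 0) := by
      have h3 : Tendsto g (nhdsWithin 0 (Set.Ioi 0)) (nhds (g 0)) := hgc0.continuousWithinAt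
      rwa [hg0] at h3
    exact Tendsto.congr' hev.symm this
  · have hev : h =ᶠ[nhdsWithin k (Set.Iio k)] g := by
      have h1 : ∀ᶠ v in nhdsWithin k (Set.Iio k), 0 < v :=
        eventually_nhdsWithin_of_eventually_nhds
          (Filter.Tendsto.eventually_const_lt hk tendsto_id)
      have h2 : ∀ᶠ v in nhdsWithin k (Set.Iio k), 0 ≤ m v := by
        apply eventually_nhdsWithin_of_eventually_nhds
        have h2' : ∀ᶠ v in nhds k, 0 < m v :=
          Filter.Tendsto.eventually_const_lt (by rw [hmk]; positivity) hmc.continuousAt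
        filter_upwards [h2'] with v hv using le_of_lt hv
      filter_upwards [h1, h2, self_mem_nhdsWithin] with v hv1 hv2 hv3
      exact key v hv1 hv3 hv2
    have : Tendsto g (nhdsWithin k (Set.Iio k)) (nhds 0) := by
      have h3 : Tendsto g (nhdsWithin k (Set.Iio k)) (nhds (g k)) := hgck.continuousWithinAt
      rwa [hgk] at h3
    exact Tendsto.congr' hev.symm this
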